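/- Under the hypotheses of the F-family, if in addition b > 0 and c ≥ 3b, then m ≤ m̃ (the case L+ holds); consequently the case L−R+ (m > m̃ and M̃ ≤ M) is not realizable by F when c ≥ 3b. -/

import Mathlib

set_option maxHeartbeats 1000000 in
private lemma Fgap_key (a b c ξ₁ ξ₂ ξ₃ ξ₄ : ℝ)
    (hder : ∀ x : ℝ,
      deriv (fun t : ℝ => t * (t - a) * (t - b) * (t - c) * (t - 1)) x
        = 5 * (x - ξ₁) * (x - ξ₂) * (x - ξ₃) * (x - ξ₄)) :
    ∀ x : ℝ, 5 * (x - ξ₁) * (x - ξ₂) * (x - ξ₃) * (x - ξ₄)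
      = (x - a) * (x - b) * (x - c) * (x - 1) + x * (x - b) * (x - c) * (x - 1)
        + x * (x - a) * (x - c) * (x - 1) + x * (x - a) * (x - b) * (x - 1)
        + x * (x - a) * (x - b) * (x - c) := by
  intro x
  have h := ((((hasDerivAt_id x).mul ((hasDerivAt_id x).sub_const a)).mul
    ((hasDerivAt_id x).sub_const b)).mul ((hasDerivAt_id x).sub_const c)).mul
    ((hasDerivAt_id x).sub_const 1)
  simp only [id_eq] at h
  have h2 : HasDerivAt (fun t : ℝ => t * (t - a) * (t - b) * (t - c) * (t - 1))
      ((x - a) * (x - b) * (x - c) * (x - 1) + x * (x - b) * (x - c) * (x - 1)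
        + x * (x - a) * (x - c) * (x - 1) + x * (x - a) * (x - b) * (x - 1)
        + x * (x - a) * (x - b) * (x - c)) x := by
    refine h.congr_deriv ?_
    simp only [Pi.mul_apply, id_eq]
    ring
  exact (hder x).symm.trans h2.deriv

set_option maxHeartbeats 1000000 in
private lemma Fgap_hF1 (a b c ξ₁ ξ₂ ξ₃ ξ₄ : ℝ) (ha : 0 ≤ a) (hab : a ≤ b) (hbc : b ≤ c) (hc1 : c ≤ 1)
    (hb0 : 0 < b) (hc3b : 3 * b ≤ c)
    (hξ12 : ξ₁ ≤ ξ₂) (hξ23 : ξ₂ ≤ ξ₃) (hξ34 : ξ₃ ≤ ξ₄)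
    (key : ∀ x : ℝ, 5 * (x - ξ₁) * (x - ξ₂) * (x - ξ₃) * (x - ξ₄)
      = (x - a) * (x - b) * (x - c) * (x - 1) + x * (x - b) * (x - c) * (x - 1)
        + x * (x - a) * (x - c) * (x - 1) + x * (x - a) * (x - b) * (x - 1)
        + x * (x - a) * (x - b) * (x - c)) :
    5 * (a/2 - ξ₁) * (a/2 - ξ₂) * (a/2 - ξ₃) * (a/2 - ξ₄) ≤ 0 := by
  have hp : (0:ℝ) ≤ a := ha
  have hq : (0:ℝ) ≤ b - a := by linarith
  have hr : (0:ℝ) ≤ c - 3 * b := by linarith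
  have ht : (0:ℝ) ≤ 1 - c := by linarith
  linarith [key (a/2),
    mul_nonneg (mul_nonneg (mul_nonneg hp hp) hr) ht,
    mul_nonneg (mul_nonneg (mul_nonneg hp hp) hr) hr,
    mul_nonneg (mul_nonneg (mul_nonneg hp hp) hq) ht,
    mul_nonneg (mul_nonneg (mul_nonneg hp hp) hq) hr,
    mul_nonneg (mul_nonneg (mul_nonneg hp hp) hq) hq,
    mul_nonneg (mul_nonneg (mul_nonneg hp hp) hp) ht,
    mul_nonneg (mul_nonneg (mul_nonneg hp hp) hp) hr,
    mul_nonneg (mul_nonneg (mul_nonneg hp hp) hp) hq,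
    mul_nonneg (mul_nonneg (mul_nonneg hp hp) hp) hp]

set_option maxHeartbeats 1000000 in
private lemma Fgap_hF2 (a b c ξ₁ ξ₂ ξ₃ ξ₄ : ℝ) (ha : 0 ≤ a) (hab : a ≤ b) (hbc : b ≤ c) (hc1 : c ≤ 1)
    (hb0 : 0 < b) (hc3b : 3 * b ≤ c)
    (hξ12 : ξ₁ ≤ ξ₂) (hξ23 : ξ₂ ≤ ξ₃) (hξ34 : ξ₃ ≤ ξ₄)
    (key : ∀ x : ℝ, 5 * (x - ξ₁) * (x - ξ₂) * (x - ξ₃) * (x - ξ₄)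
      = (x - a) * (x - b) * (x - c) * (x - 1) + x * (x - b) * (x - c) * (x - 1)
        + x * (x - a) * (x - c) * (x - 1) + x * (x - a) * (x - b) * (x - 1)
        + x * (x - a) * (x - b) * (x - c)) :
    5 * ((a+b)/2 - ξ₁) * ((a+b)/2 - ξ₂) * ((a+b)/2 - ξ₃) * ((a+b)/2 - ξ₄) ≤ 0 := by
  have hp : (0:ℝ) ≤ a := ha
  have hq : (0:ℝ) ≤ b - a := by linarith
  have hr : (0:ℝ) ≤ c - 3 * b := by linarith
  have ht : (0:ℝ) ≤ 1 - c := by linarith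
  linarith [key ((a+b)/2),
    mul_nonneg (mul_nonneg (mul_nonneg hq hq) hr) ht,
    mul_nonneg (mul_nonneg (mul_nonneg hq hq) hr) hr,
    mul_nonneg (mul_nonneg (mul_nonneg hq hq) hq) ht,
    mul_nonneg (mul_nonneg (mul_nonneg hq hq) hq) hr,
    mul_nonneg (mul_nonneg (mul_nonneg hq hq) hq) hq,
    mul_nonneg (mul_nonneg (mul_nonneg hp hq) hq) ht,
    mul_nonneg (mul_nonneg (mul_nonneg hp hq) hq) hr,
    mul_nonneg (mul_nonneg (mul_nonneg hp hq) hq) hq]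

set_option maxHeartbeats 1000000 in
private lemma Fgap_hF3 (a b c ξ₁ ξ₂ ξ₃ ξ₄ : ℝ) (ha : 0 ≤ a) (hab : a ≤ b) (hbc : b ≤ c) (hc1 : c ≤ 1)
    (hb0 : 0 < b) (hc3b : 3 * b ≤ c)
    (hξ12 : ξ₁ ≤ ξ₂) (hξ23 : ξ₂ ≤ ξ₃) (hξ34 : ξ₃ ≤ ξ₄)
    (key : ∀ x : ℝ, 5 * (x - ξ₁) * (x - ξ₂) * (x - ξ₃) * (x - ξ₄)
      = (x - a) * (x - b) * (x - c) * (x - 1) + x * (x - b) * (x - c) * (x - 1)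
        + x * (x - a) * (x - c) * (x - 1) + x * (x - a) * (x - b) * (x - 1)
        + x * (x - a) * (x - b) * (x - c)) :
    0 ≤ 5 * ((b+c)/2 - ξ₁) * ((b+c)/2 - ξ₂) * ((b+c)/2 - ξ₃) * ((b+c)/2 - ξ₄) := by
  have hp : (0:ℝ) ≤ a := ha
  have hq : (0:ℝ) ≤ b - a := by linarith
  have hr : (0:ℝ) ≤ c - 3 * b := by linarith
  have ht : (0:ℝ) ≤ 1 - c := by linarith
  linarith [key ((b+c)/2),
    mul_nonneg (mul_nonneg (mul_nonneg hr hr) hr) ht,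
    mul_nonneg (mul_nonneg (mul_nonneg hr hr) hr) hr,
    mul_nonneg (mul_nonneg (mul_nonneg hq hr) hr) ht,
    mul_nonneg (mul_nonneg (mul_nonneg hq hr) hr) hr,
    mul_nonneg (mul_nonneg (mul_nonneg hq hq) hr) ht,
    mul_nonneg (mul_nonneg (mul_nonneg hq hq) hr) hr,
    mul_nonneg (mul_nonneg (mul_nonneg hq hq) hq) ht,
    mul_nonneg (mul_nonneg (mul_nonneg hq hq) hq) hr,
    mul_nonneg (mul_nonneg (mul_nonneg hp hr) hr) ht,
    mul_nonneg (mul_nonneg (mul_nonneg hp hr) hr) hr,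
    mul_nonneg (mul_nonneg (mul_nonneg hp hq) hr) ht,
    mul_nonneg (mul_nonneg (mul_nonneg hp hq) hr) hr,
    mul_nonneg (mul_nonneg (mul_nonneg hp hq) hq) ht,
    mul_nonneg (mul_nonneg (mul_nonneg hp hq) hq) hr,
    mul_nonneg (mul_nonneg (mul_nonneg hp hq) hq) hq,
    mul_nonneg (mul_nonneg (mul_nonneg hp hp) hr) ht,
    mul_nonneg (mul_nonneg (mul_nonneg hp hp) hr) hr,
    mul_nonneg (mul_nonneg (mul_nonneg hp hp) hq) ht,
    mul_nonneg (mul_nonneg (mul_nonneg hp hp) hq) hr,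
    mul_nonneg (mul_nonneg (mul_nonneg hp hp) hq) hq,
    mul_nonneg (mul_nonneg (mul_nonneg hp hp) hp) ht,
    mul_nonneg (mul_nonneg (mul_nonneg hp hp) hp) hr,
    mul_nonneg (mul_nonneg (mul_nonneg hp hp) hp) hq,
    mul_nonneg (mul_nonneg (mul_nonneg hp hp) hp) hp]

set_option maxHeartbeats 1000000 in
private lemma Fgap_hF4 (a b c ξ₁ ξ₂ ξ₃ ξ₄ : ℝ) (ha : 0 ≤ a) (hab : a ≤ b) (hbc : b ≤ c) (hc1 : c ≤ 1)
    (hb0 : 0 < b) (hc3b : 3 * b ≤ c)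
    (hξ12 : ξ₁ ≤ ξ₂) (hξ23 : ξ₂ ≤ ξ₃) (hξ34 : ξ₃ ≤ ξ₄)
    (key : ∀ x : ℝ, 5 * (x - ξ₁) * (x - ξ₂) * (x - ξ₃) * (x - ξ₄)
      = (x - a) * (x - b) * (x - c) * (x - 1) + x * (x - b) * (x - c) * (x - 1)
        + x * (x - a) * (x - c) * (x - 1) + x * (x - a) * (x - b) * (x - 1)
        + x * (x - a) * (x - b) * (x - c)) :
    5 * ((c+1)/2 - ξ₁) * ((c+1)/2 - ξ₂) * ((c+1)/2 - ξ₃) * ((c+1)/2 - ξ₄) ≤ 0 := by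
  have hp : (0:ℝ) ≤ a := ha
  have hq : (0:ℝ) ≤ b - a := by linarith
  have hr : (0:ℝ) ≤ c - 3 * b := by linarith
  have ht : (0:ℝ) ≤ 1 - c := by linarith
  linarith [key ((c+1)/2),
    mul_nonneg (mul_nonneg (mul_nonneg ht ht) ht) ht,
    mul_nonneg (mul_nonneg (mul_nonneg hr ht) ht) ht,
    mul_nonneg (mul_nonneg (mul_nonneg hr hr) ht) ht,
    mul_nonneg (mul_nonneg (mul_nonneg hq ht) ht) ht,
    mul_nonneg (mul_nonneg (mul_nonneg hq hr) ht) ht,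
    mul_nonneg (mul_nonneg (mul_nonneg hq hq) ht) ht,
    mul_nonneg (mul_nonneg (mul_nonneg hp ht) ht) ht,
    mul_nonneg (mul_nonneg (mul_nonneg hp hr) ht) ht,
    mul_nonneg (mul_nonneg (mul_nonneg hp hq) ht) ht,
    mul_nonneg (mul_nonneg (mul_nonneg hp hp) ht) ht]

set_option maxHeartbeats 1000000 in
private lemma Fgap_hF5 (a b c ξ₁ ξ₂ ξ₃ ξ₄ : ℝ) (ha : 0 ≤ a) (hab : a ≤ b) (hbc : b ≤ c) (hc1 : c ≤ 1)
    (hb0 : 0 < b) (hc3b : 3 * b ≤ c)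
    (hξ12 : ξ₁ ≤ ξ₂) (hξ23 : ξ₂ ≤ ξ₃) (hξ34 : ξ₃ ≤ ξ₄)
    (key : ∀ x : ℝ, 5 * (x - ξ₁) * (x - ξ₂) * (x - ξ₃) * (x - ξ₄)
      = (x - a) * (x - b) * (x - c) * (x - 1) + x * (x - b) * (x - c) * (x - 1)
        + x * (x - a) * (x - c) * (x - 1) + x * (x - a) * (x - b) * (x - 1)
        + x * (x - a) * (x - b) * (x - c)) :
    5 * ((c+1-b)/2 - ξ₁) * ((c+1-b)/2 - ξ₂) * ((c+1-b)/2 - ξ₃) * ((c+1-b)/2 - ξ₄) ≤ 0 := by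
  have hp : (0:ℝ) ≤ a := ha
  have hq : (0:ℝ) ≤ b - a := by linarith
  have hr : (0:ℝ) ≤ c - 3 * b := by linarith
  have ht : (0:ℝ) ≤ 1 - c := by linarith
  linarith [key ((c+1-b)/2),
    mul_nonneg (mul_nonneg (mul_nonneg ht ht) ht) ht,
    mul_nonneg (mul_nonneg (mul_nonneg hr ht) ht) ht,
    mul_nonneg (mul_nonneg (mul_nonneg hr hr) ht) ht,
    mul_nonneg (mul_nonneg (mul_nonneg hq ht) ht) ht,
    mul_nonneg (mul_nonneg (mul_nonneg hq hr) ht) ht,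
    mul_nonneg (mul_nonneg (mul_nonneg hq hr) hr) ht,
    mul_nonneg (mul_nonneg (mul_nonneg hq hr) hr) hr,
    mul_nonneg (mul_nonneg (mul_nonneg hq hq) ht) ht,
    mul_nonneg (mul_nonneg (mul_nonneg hq hq) hr) ht,
    mul_nonneg (mul_nonneg (mul_nonneg hq hq) hr) hr,
    mul_nonneg (mul_nonneg (mul_nonneg hq hq) hq) ht,
    mul_nonneg (mul_nonneg (mul_nonneg hq hq) hq) hr,
    mul_nonneg (mul_nonneg (mul_nonneg hq hq) hq) hq,
    mul_nonneg (mul_nonneg (mul_nonneg hp ht) ht) ht,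
    mul_nonneg (mul_nonneg (mul_nonneg hp hr) ht) ht,
    mul_nonneg (mul_nonneg (mul_nonneg hp hr) hr) ht,
    mul_nonneg (mul_nonneg (mul_nonneg hp hr) hr) hr,
    mul_nonneg (mul_nonneg (mul_nonneg hp hq) ht) ht,
    mul_nonneg (mul_nonneg (mul_nonneg hp hq) hr) ht,
    mul_nonneg (mul_nonneg (mul_nonneg hp hq) hr) hr,
    mul_nonneg (mul_nonneg (mul_nonneg hp hq) hq) ht,
    mul_nonneg (mul_nonneg (mul_nonneg hp hq) hq) hr,
    mul_nonneg (mul_nonneg (mul_nonneg hp hq) hq) hq,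
    mul_nonneg (mul_nonneg (mul_nonneg hp hp) ht) ht,
    mul_nonneg (mul_nonneg (mul_nonneg hp hp) hr) ht,
    mul_nonneg (mul_nonneg (mul_nonneg hp hp) hr) hr,
    mul_nonneg (mul_nonneg (mul_nonneg hp hp) hq) ht,
    mul_nonneg (mul_nonneg (mul_nonneg hp hp) hq) hr,
    mul_nonneg (mul_nonneg (mul_nonneg hp hp) hq) hq,
    mul_nonneg (mul_nonneg (mul_nonneg hp hp) hp) ht,
    mul_nonneg (mul_nonneg (mul_nonneg hp hp) hp) hr,
    mul_nonneg (mul_nonneg (mul_nonneg hp hp) hp) hq,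
    mul_nonneg (mul_nonneg (mul_nonneg hp hp) hp) hp]

set_option maxHeartbeats 1000000 in
private lemma Fgap_main (a b c ξ₁ ξ₂ ξ₃ ξ₄ : ℝ) (ha : 0 ≤ a) (hab : a ≤ b) (hbc : b ≤ c) (hc1 : c ≤ 1)
    (hb0 : 0 < b) (hc3b : 3 * b ≤ c)
    (hξ12 : ξ₁ ≤ ξ₂) (hξ23 : ξ₂ ≤ ξ₃) (hξ34 : ξ₃ ≤ ξ₄)
    (hder : ∀ x : ℝ,
      deriv (fun t : ℝ => t * (t - a) * (t - b) * (t - c) * (t - 1)) x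
        = 5 * (x - ξ₁) * (x - ξ₂) * (x - ξ₃) * (x - ξ₄)) :
    b / 2 ≤ ξ₂ - ξ₁ ∧ b / 2 ≤ ξ₃ - ξ₂ ∧ b / 2 ≤ ξ₄ - ξ₃ := by
  have key := Fgap_key a b c ξ₁ ξ₂ ξ₃ ξ₄ hder
  have hF1 := Fgap_hF1 a b c ξ₁ ξ₂ ξ₃ ξ₄ ha hab hbc hc1 hb0 hc3b hξ12 hξ23 hξ34 key
  have hF2 := Fgap_hF2 a b c ξ₁ ξ₂ ξ₃ ξ₄ ha hab hbc hc1 hb0 hc3b hξ12 hξ23 hξ34 key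
  have hF3 := Fgap_hF3 a b c ξ₁ ξ₂ ξ₃ ξ₄ ha hab hbc hc1 hb0 hc3b hξ12 hξ23 hξ34 key
  have hF4 := Fgap_hF4 a b c ξ₁ ξ₂ ξ₃ ξ₄ ha hab hbc hc1 hb0 hc3b hξ12 hξ23 hξ34 key
  have hF5 := Fgap_hF5 a b c ξ₁ ξ₂ ξ₃ ξ₄ ha hab hbc hc1 hb0 hc3b hξ12 hξ23 hξ34 key
  have hq : (0:ℝ) ≤ b - a := by linarith
  have hx1 : ξ₁ ≤ a / 2 := by
    by_contra hcon
    push_neg at hcon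
    have h1 : 0 < ξ₁ - a/2 := by linarith
    have h2 : 0 < ξ₂ - a/2 := by linarith
    have h3 : 0 < ξ₃ - a/2 := by linarith
    have h4 : 0 < ξ₄ - a/2 := by linarith
    linarith [hF1, mul_pos (mul_pos (mul_pos h1 h2) h3) h4]
  have hx4 : (c + 1) / 2 ≤ ξ₄ := by
    by_contra hcon
    push_neg at hcon
    have h1 : 0 < (c+1)/2 - ξ₁ := by linarith
    have h2 : 0 < (c+1)/2 - ξ₂ := by linarith
    have h3 : 0 < (c+1)/2 - ξ₃ := by linarith
    have h4 : 0 < (c+1)/2 - ξ₄ := by linarith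
    linarith [hF4, mul_pos (mul_pos (mul_pos h1 h2) h3) h4]
  have hx3 : (b + c) / 2 ≤ ξ₃ := by
    by_contra hcon
    push_neg at hcon
    have h1 : 0 < (b+c)/2 - ξ₁ := by linarith
    have h2 : 0 < (b+c)/2 - ξ₂ := by linarith
    have h3 : 0 < (b+c)/2 - ξ₃ := by linarith
    have h4 : 0 < ξ₄ - (b+c)/2 := by linarith
    linarith [hF3, mul_pos (mul_pos (mul_pos h1 h2) h3) h4]
  have hx2 : (a + b) / 2 ≤ ξ₂ := by
    by_contra hcon
    push_neg at hcon
    have h1 : 0 < (a+b)/2 - ξ₁ := by linarith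
    have h2 : 0 < (a+b)/2 - ξ₂ := by linarith
    have h3 : 0 < ξ₃ - (a+b)/2 := by linarith
    have h4 : 0 < ξ₄ - (a+b)/2 := by linarith
    linarith [hF2, mul_pos (mul_pos (mul_pos h1 h2) h3) h4]
  have hx2b : ξ₂ ≤ b := by
    by_contra hcon
    push_neg at hcon
    have h1 : 0 < b - ξ₁ := by linarith
    have h2 : 0 < ξ₂ - b := by linarith
    have h3 : 0 < ξ₃ - b := by linarith
    have h4 : 0 < ξ₄ - b := by linarith
    have hDb : 0 ≤ b * (b - a) * (c - b) * (1 - b) := by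
      have := mul_nonneg (mul_nonneg (mul_nonneg hb0.le hq) (by linarith : (0:ℝ) ≤ c - b))
        (by linarith : (0:ℝ) ≤ 1 - b)
      linarith [this]
    linarith [key b, mul_pos (mul_pos (mul_pos h1 h2) h3) h4, hDb]
  have hx3b : ξ₃ ≤ (c + 1 - b) / 2 := by
    by_contra hcon
    push_neg at hcon
    have h1 : 0 < (c+1-b)/2 - ξ₁ := by linarith
    have h2 : 0 < (c+1-b)/2 - ξ₂ := by linarith
    have h3 : 0 < ξ₃ - (c+1-b)/2 := by linarith
    have h4 : 0 < ξ₄ - (c+1-b)/2 := by linarith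
    linarith [hF5, mul_pos (mul_pos (mul_pos h1 h2) h3) h4]
  -- each gap of critical points is at least b/2
  have g1 : b / 2 ≤ ξ₂ - ξ₁ := by linarith
  have g2 : b / 2 ≤ ξ₃ - ξ₂ := by linarith
  have g3 : b / 2 ≤ ξ₄ - ξ₃ := by linarith
  exact ⟨by linarith, by linarith, by linarith⟩

/-- For `F(x) = x(x-a)(x-b)(x-c)(x-1)` with `0 ≤ a ≤ b ≤ c ≤ 1`, `b > 0` and `c ≥ 3b`,
the case L+ holds: `m ≤ m̃`; consequently the case L−R+ is not realizable by `F`. -/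
theorem F_family_c_ge_3b_Lplus
    (a b c : ℝ) (ha : 0 ≤ a) (hab : a ≤ b) (hbc : b ≤ c) (hc1 : c ≤ 1)
    (hb0 : 0 < b) (hc3b : 3 * b ≤ c)
    (ξ₁ ξ₂ ξ₃ ξ₄ : ℝ) (hξ12 : ξ₁ ≤ ξ₂) (hξ23 : ξ₂ ≤ ξ₃) (hξ34 : ξ₃ ≤ ξ₄)
    (hder : ∀ x : ℝ,
      deriv (fun t : ℝ => t * (t - a) * (t - b) * (t - c) * (t - 1)) x
        = 5 * (x - ξ₁) * (x - ξ₂) * (x - ξ₃) * (x - ξ₄))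
    (z₁ z₂ z₃ z₄ m M mt Mt : ℝ)
    (hz₁ : z₁ = a / 2) (hz₂ : z₂ = (a + b) / 2)
    (hz₃ : z₃ = (b + c) / 2) (hz₄ : z₄ = (c + 1) / 2)
    (hm : m = min (min (z₂ - z₁) (z₃ - z₂)) (z₄ - z₃))
    (hM : M = max (max (z₂ - z₁) (z₃ - z₂)) (z₄ - z₃))
    (hmt : mt = min (min (ξ₂ - ξ₁) (ξ₃ - ξ₂)) (ξ₄ - ξ₃))
    (hMt : Mt = max (max (ξ₂ - ξ₁) (ξ₃ - ξ₂)) (ξ₄ - ξ₃)) :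
    m ≤ mt ∧ ¬ (mt < m ∧ Mt ≤ M) := by
  -- the derivative, computed explicitly
  -- Sign facts for the derivative at five special points
  -- localization of the critical points
  obtain ⟨g1, g2, g3⟩ := Fgap_main a b c ξ₁ ξ₂ ξ₃ ξ₄ ha hab hbc hc1 hb0 hc3b hξ12 hξ23 hξ34 hder
  have hmtge : b / 2 ≤ mt := by
    rw [hmt]
    exact le_min (le_min g1 g2) g3
  have hmle : m ≤ b / 2 := by
    have h := le_trans (min_le_left (min (z₂ - z₁) (z₃ - z₂)) (z₄ - z₃))
      (min_le_left (z₂ - z₁) (z₃ - z₂))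
    rw [← hm] at h
    rw [hz₁, hz₂] at h
    linarith
  refine ⟨by linarith, ?_⟩
  rintro ⟨h1, _⟩
  linarith
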